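/- Fix μ0, μ1 > 0 and real numbers d0 ≥ 0 and d1 ≥ 0, and define H(ω) := e^{−ω}·(ω − μ0·(ω² + d0))·(ω − μ1·(ω² + d1)) − e^{ω}·(ω + μ0·(ω² + d0))·(ω + μ1·(ω² + d1)). Then H(ω) ≠ 0 for every ω > 0; consequently, the string–point-mass eigenvalue problem has no positive eigenvalue when d0 ≥ 0 and d1 ≥ 0. -/

import Mathlib

open Real Set

open MeasureTheory intervalIntegral

/-- If d0 ≥ 0 and d1 ≥ 0 then H(ω) ≠ 0 for all ω > 0; hence the
string–point-mass eigenvalue problem has no positive eigenvalue. -/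
theorem no_positive_eigenvalues_of_nonneg_freq_shift
    (μ0 μ1 d0 d1 : ℝ) (hμ0 : 0 < μ0) (hμ1 : 0 < μ1) (hd0 : 0 ≤ d0) (hd1 : 0 ≤ d1) :
    (∀ ω : ℝ, 0 < ω →
      Real.exp (-ω) * (ω - μ0*(ω^2 + d0)) * (ω - μ1*(ω^2 + d1))
        - Real.exp ω * (ω + μ0*(ω^2 + d0)) * (ω + μ1*(ω^2 + d1)) ≠ 0) ∧
    ¬ ∃ (lam : ℝ) (X : ℝ → ℝ), 0 < lam ∧ ContDiff ℝ 2 X ∧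
        (∀ x ∈ Icc (0:ℝ) 1, deriv (deriv X) x = lam * X x) ∧
        deriv X 0 = μ0 * (lam + d0) * X 0 ∧
        deriv X 1 = -μ1 * (lam + d1) * X 1 ∧
        (∃ x ∈ Icc (0:ℝ) 1, X x ≠ 0) := by
  constructor
  · intro ω hω
    have ha : 0 < μ0 * (ω^2 + d0) := by positivity
    have hb : 0 < μ1 * (ω^2 + d1) := by positivity
    set a := μ0 * (ω^2 + d0)
    set b := μ1 * (ω^2 + d1)
    have hE : Real.exp (-ω) < Real.exp ω := Real.exp_lt_exp.mpr (by linarith)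
    have hE0 : 0 < Real.exp (-ω) := Real.exp_pos _
    intro h
    nlinarith [mul_pos (show (0:ℝ) < ω + a by linarith) (show (0:ℝ) < ω + b by linarith),
      mul_pos hω ha, mul_pos hω hb, mul_pos ha hb,
      mul_pos hE0 (mul_pos hω (show (0:ℝ) < a + b by linarith)),
      mul_lt_mul_of_pos_right hE (mul_pos (show (0:ℝ) < ω + a by linarith) (show (0:ℝ) < ω + b by linarith))]
  · rintro ⟨lam, X, hlam, hX, hode, hb0, hb1, x0, hx0, hXx0⟩
    have hXd : ContDiff ℝ 1 (deriv X) := by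
      have := (contDiff_succ_iff_deriv.mp (by exact_mod_cast hX : ContDiff ℝ ((1:ℕ) + 1) X)).2.2
      exact_mod_cast this
    have hXc : Continuous X := hX.continuous
    have hX'c : Continuous (deriv X) := hXd.continuous
    have hX''c : Continuous (deriv (deriv X)) := (contDiff_one_iff_deriv.mp hXd).2
    have hX'diff : Differentiable ℝ (deriv X) := hXd.differentiable one_ne_zero
    have hXdiff : Differentiable ℝ X := hX.differentiable two_ne_zero
    -- FTC for g = X' * X
    have key : ∫ x in (0:ℝ)..1, (deriv (deriv X) x * X x + deriv X x * deriv X x)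
        = deriv X 1 * X 1 - deriv X 0 * X 0 := by
      apply integral_eq_sub_of_hasDerivAt (f := fun x => deriv X x * X x)
      · intro x _
        exact ((hX'diff x).hasDerivAt).mul ((hXdiff x).hasDerivAt)
      · exact ((hX''c.mul hXc).add (hX'c.mul hX'c)).intervalIntegrable _ _
    set h : ℝ → ℝ := fun x => lam * X x ^ 2 + deriv X x ^ 2 with hh
    have hcongr : ∫ x in (0:ℝ)..1, (deriv (deriv X) x * X x + deriv X x * deriv X x)
        = ∫ x in (0:ℝ)..1, h x := by
      apply integral_congr
      intro x hx
      rw [uIcc_of_le (by norm_num)] at hx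
      simp only [hh]
      rw [hode x hx]; ring
    have hInt : ∫ x in (0:ℝ)..1, h x
        = -μ1 * (lam + d1) * X 1 * X 1 - μ0 * (lam + d0) * X 0 * X 0 := by
      rw [← hcongr, key, hb0, hb1]
    have hhc : Continuous h := by
      apply Continuous.add
      · exact continuous_const.mul (hXc.pow 2)
      · exact hX'c.pow 2
    have hnonneg : ∀ x, 0 ≤ h x := by
      intro x; simp only [hh]; positivity
    have hge : 0 ≤ ∫ x in (0:ℝ)..1, h x :=
      integral_nonneg (by norm_num) (fun x _ => hnonneg x)
    have hle : ∫ x in (0:ℝ)..1, h x ≤ 0 := by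
      rw [hInt]
      have A : 0 ≤ μ0 * (lam + d0) := by positivity
      have B : 0 ≤ μ1 * (lam + d1) := by positivity
      nlinarith [mul_nonneg A (mul_self_nonneg (X 0)), mul_nonneg B (mul_self_nonneg (X 1))]
    have hzero : ∫ x in (0:ℝ)..1, h x = 0 := le_antisymm hle hge
    -- h = 0 on Icc 0 1
    have hae : h =ᵐ[volume.restrict (Ioc (0:ℝ) 1)] 0 := by
      have := (integral_eq_zero_iff_of_le_of_nonneg_ae (by norm_num : (0:ℝ) ≤ 1)
        (Filter.Eventually.of_forall (fun x => hnonneg x))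
        (hhc.intervalIntegrable 0 1)).mp hzero
      simpa using this
    have haeIcc : h =ᵐ[volume.restrict (Icc (0:ℝ) 1)] 0 := by
      rwa [Measure.restrict_congr_set Ioc_ae_eq_Icc] at hae
    have heq : EqOn h 0 (Icc (0:ℝ) 1) :=
      Measure.eqOn_Icc_of_ae_eq volume (by norm_num) haeIcc hhc.continuousOn
        continuousOn_const
    have := heq hx0
    simp only [hh, Pi.zero_apply] at this
    have : 0 < X x0 ^ 2 := by positivity
    nlinarith [sq_nonneg (deriv X x0)]
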